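/- Equip the unit circle 𝕋 with the metric ρ(e^{2πis}, e^{2πit}) = min_{k∈ℤ} |s − t + k|. Let a₁,…,a_L, b₁,…,b_L ∈ 𝕋 and ε > 0, and suppose there is a positive integer k such that for every k-arc I one has #{r : a_r ∈ I} ≤ #{r : b_r ∈ I ± ε}. Then there exists a permutation σ of {1,…,L} such that ρ(a_j, b_{σ(j)}) ≤ ε + 1/k for all j = 1,…,L. -/

import Mathlib

/-- `e^{2πit}`. -/
noncomputable def expc (t : ℝ) : ℂ := Complex.exp (2 * Real.pi * Complex.I * (t : ℂ))

lemma expc_add_int (x : ℝ) (n : ℤ) : expc (x + n) = expc x := by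
  unfold expc
  rw [Complex.ofReal_add, mul_add, Complex.exp_add, Complex.ofReal_intCast]
  have : Complex.exp (2 * ↑Real.pi * Complex.I * (n : ℂ)) = 1 := by
    rw [show (2 * (Real.pi:ℂ) * Complex.I * (n:ℂ)) = (n:ℤ) * (2 * Real.pi * Complex.I) by ring]
    exact Complex.exp_int_mul_two_pi_mul_I n
  rw [this, mul_one]

lemma expc_inj {x y : ℝ} (h : expc x = expc y) : ∃ n : ℤ, x = y + n := by
  unfold expc at h
  rw [Complex.exp_eq_exp_iff_exists_int] at h
  obtain ⟨n, hn⟩ := h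
  refine ⟨n, ?_⟩
  have hpi : (Real.pi : ℂ) ≠ 0 := by exact_mod_cast Real.pi_ne_zero
  have h2 : (2 * (Real.pi:ℂ) * Complex.I) * (x : ℂ) = (2 * (Real.pi:ℂ) * Complex.I) * ((y : ℂ) + n) := by
    rw [hn]; ring
  have := mul_left_cancel₀ (by simp [Complex.I_ne_zero, hpi] : (2 * (Real.pi:ℂ) * Complex.I) ≠ 0) h2
  exact_mod_cast this

open Finset
open scoped Classical

lemma key_lemma {L : ℕ} (k : ℕ) (hk : 0 < k) (ε : ℝ) (hε : 0 < ε)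
    (a b : Fin L → ℂ) (s : Fin L → ℝ) (c : Fin L → ℤ)
    (hc : ∀ j, (c j : ℝ)/k ≤ s j ∧ s j ≤ ((c j : ℝ) + 1)/k)
    (haj : ∀ j, a j = expc (s j))
    (H : ∀ m n : ℤ, m < n →
      (Finset.univ.filter (fun r : Fin L => ∃ x : ℝ, (m:ℝ)/k ≤ x ∧ x ≤ (n:ℝ)/k ∧ a r = expc x)).card ≤
      (Finset.univ.filter (fun r : Fin L => ∃ x : ℝ, (m:ℝ)/k - ε ≤ x ∧ x ≤ (n:ℝ)/k + ε ∧ b r = expc x)).card)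
    (A : Finset (Fin L))
    (hwin : ∀ j ∈ A, ∀ j' ∈ A, ((c j' : ℝ) + 1 - c j)/k + 2*ε < 1) :
    A.card ≤ (Finset.univ.filter (fun i : Fin L => ∃ x : ℝ, b i = expc x ∧
        ∃ j ∈ A, (c j : ℝ)/k - ε ≤ x ∧ x ≤ ((c j : ℝ) + 1)/k + ε)).card := by
  have hK : (0:ℝ) < (k:ℝ) := by exact_mod_cast hk
  induction A using Finset.strongInduction with
  | _ A ih =>
  rcases A.eq_empty_or_nonempty with rfl | hAne
  · simp
  -- setup
  set E : Finset ℤ := A.image c with hE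
  have hEne : E.Nonempty := hAne.image c
  set comp : Finset ℤ := E.filter
    (fun e => ∀ d ∈ E, d < e → ∃ d' ∈ E, d < d' ∧ (d':ℝ) - d - 1 ≤ 2*ε*k) with hcompdef
  have hμE : E.min' hEne ∈ E := E.min'_mem hEne
  set μ : ℤ := E.min' hEne with hμdef
  have hμcomp : μ ∈ comp := by
    rw [hcompdef, mem_filter]
    exact ⟨hμE, fun d hd hdlt => absurd (E.min'_le d hd) (not_le.mpr hdlt)⟩
  have hcompne : comp.Nonempty := ⟨μ, hμcomp⟩
  set ν : ℤ := comp.max' hcompne with hνdef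
  have hνcomp : ν ∈ comp := comp.max'_mem hcompne
  have hνE : ν ∈ E := (mem_filter.mp hνcomp).1
  have hνprop : ∀ d ∈ E, d < ν → ∃ d' ∈ E, d < d' ∧ (d':ℝ) - d - 1 ≤ 2*ε*k :=
    (mem_filter.mp hνcomp).2
  have hdc : ∀ e ∈ E, e ≤ ν → e ∈ comp := by
    intro e he hle
    rw [hcompdef, mem_filter]
    exact ⟨he, fun d hd hdlt => hνprop d hd (lt_of_lt_of_le hdlt hle)⟩
  have hμν : μ ≤ ν := E.min'_le ν hνE
  -- the key separation fact
  have hfact : ∀ e ∈ E, ν < e → 2*ε*k < (e:ℝ) - ν - 1 := by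
    by_contra hcon
    push_neg at hcon
    obtain ⟨e₀, he₀E, he₀ν, he₀gap⟩ := hcon
    set S : Finset ℤ := E.filter (fun e => ν < e ∧ (e:ℝ) - ν - 1 ≤ 2*ε*k) with hSdef
    have hSne : S.Nonempty := ⟨e₀, by rw [hSdef, mem_filter]; exact ⟨he₀E, he₀ν, he₀gap⟩⟩
    set e := S.min' hSne with hedef
    have heS : e ∈ S := S.min'_mem hSne
    rw [hSdef, mem_filter] at heS
    obtain ⟨heE, heν, hegap⟩ := heS
    have hecomp : e ∈ comp := by
      rw [hcompdef, mem_filter]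
      refine ⟨heE, fun d hd hdlt => ?_⟩
      rcases lt_trichotomy d ν with h1 | h1 | h1
      · exact hνprop d hd h1
      · exact ⟨e, heE, by rw [← h1] at heν; exact heν, by rw [h1]; exact hegap⟩
      · exfalso
        have hdS : d ∈ S := by
          rw [hSdef, mem_filter]
          refine ⟨hd, h1, ?_⟩
          have : (d:ℝ) < e := by exact_mod_cast hdlt
          linarith
        exact absurd (S.min'_le d hdS) (not_le.mpr hdlt)
    exact absurd (comp.le_max' e hecomp) (not_le.mpr heν)
  -- successor within comp
  have hsucc : ∀ d ∈ comp, d < ν → ∃ d' ∈ comp, d < d' ∧ (d':ℝ) - d - 1 ≤ 2*ε*k := by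
    intro d hdcomp hdν
    obtain ⟨d', hd'E, hdd', hgap⟩ := hνprop d (mem_filter.mp hdcomp).1 hdν
    have hd'ν : d' ≤ ν := by
      by_contra hgt
      push_neg at hgt
      have h1 := hfact d' hd'E hgt
      have : (d:ℝ) < ν := by exact_mod_cast hdν
      linarith
    exact ⟨d', hdc d' hd'E hd'ν, hdd', hgap⟩
  -- split A
  set A₁ : Finset (Fin L) := A.filter (fun j => c j ≤ ν) with hA₁def
  set A₂ : Finset (Fin L) := A.filter (fun j => ¬ (c j ≤ ν)) with hA₂def
  obtain ⟨j₀, hj₀A, hj₀c⟩ : ∃ j ∈ A, c j = μ := by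
    have := hμE; rw [hE, mem_image] at this
    obtain ⟨j, hj, hjc⟩ := this; exact ⟨j, hj, hjc⟩
  have hj₀A₁ : j₀ ∈ A₁ := by
    rw [hA₁def, mem_filter]; exact ⟨hj₀A, by rw [hj₀c]; exact hμν⟩
  have hcard : A₁.card + A₂.card = A.card := A.card_filter_add_card_filter_not _
  -- step 1
  have hstep1 : A₁.card ≤ (Finset.univ.filter (fun r : Fin L => ∃ x : ℝ,
      (μ:ℝ)/k ≤ x ∧ x ≤ ((ν+1:ℤ):ℝ)/k ∧ a r = expc x)).card := by
    apply card_le_card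
    intro j hj
    rw [hA₁def, mem_filter] at hj
    obtain ⟨hjA, hjν⟩ := hj
    rw [mem_filter]
    refine ⟨mem_univ j, s j, ?_, ?_, haj j⟩
    · refine le_trans ?_ (hc j).1
      apply (div_le_div_iff_of_pos_right hK).mpr
      have : μ ≤ c j := E.min'_le _ (mem_image_of_mem c hjA)
      exact_mod_cast this
    · refine le_trans (hc j).2 ?_
      apply (div_le_div_iff_of_pos_right hK).mpr
      push_cast
      have : (c j : ℝ) ≤ ν := by exact_mod_cast hjν
      linarith
  -- step 2 : harc
  have hstep2 := H μ (ν+1) (by omega)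
  -- step 3 : coverage
  set P₁ : Finset (Fin L) := Finset.univ.filter (fun i : Fin L => ∃ x : ℝ, b i = expc x ∧
      ∃ j ∈ A₁, (c j : ℝ)/k - ε ≤ x ∧ x ≤ ((c j : ℝ) + 1)/k + ε) with hP₁def
  set P₂ : Finset (Fin L) := Finset.univ.filter (fun i : Fin L => ∃ x : ℝ, b i = expc x ∧
      ∃ j ∈ A₂, (c j : ℝ)/k - ε ≤ x ∧ x ≤ ((c j : ℝ) + 1)/k + ε) with hP₂def
  have hstep3 : (Finset.univ.filter (fun r : Fin L => ∃ x : ℝ,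
      (μ:ℝ)/k - ε ≤ x ∧ x ≤ ((ν+1:ℤ):ℝ)/k + ε ∧ b r = expc x)).card ≤ P₁.card := by
    apply card_le_card
    intro i hi
    rw [mem_filter] at hi
    obtain ⟨-, x, hx1, hx2, hbx⟩ := hi
    -- find the cell
    set T : Finset ℤ := comp.filter (fun e => (e:ℝ)/k - ε ≤ x) with hTdef
    have hTne : T.Nonempty := ⟨μ, by rw [hTdef, mem_filter]; exact ⟨hμcomp, hx1⟩⟩
    set cs : ℤ := T.max' hTne with hcsdef
    have hcsT : cs ∈ T := T.max'_mem hTne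
    rw [hTdef, mem_filter] at hcsT
    obtain ⟨hcscomp, hcsx⟩ := hcsT
    have hcsν : cs ≤ ν := comp.le_max' cs hcscomp
    have hcsub : x ≤ ((cs:ℝ) + 1)/k + ε := by
      by_contra hgt
      push_neg at hgt
      have hcslt : cs < ν := by
        rcases eq_or_lt_of_le hcsν with h1 | h1
        · exfalso
          apply absurd hx2
          push_neg
          rw [← h1]
          push_cast
          exact hgt
        · exact h1
      obtain ⟨d', hd'comp, hd'gt, hd'gap⟩ := hsucc cs hcscomp hcslt
      have hd'T : d' ∈ T := by
        rw [hTdef, mem_filter]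
        refine ⟨hd'comp, ?_⟩
        have h2 : (d':ℝ)/k ≤ ((cs:ℝ)+1)/k + 2*ε := by
          rw [div_add' _ _ _ (ne_of_gt hK)]
          apply (div_le_div_iff_of_pos_right hK).mpr
          linarith
        linarith
      exact absurd (T.le_max' d' hd'T) (not_le.mpr hd'gt)
    obtain ⟨j, hjA, hjc⟩ : ∃ j ∈ A, c j = cs := by
      have : cs ∈ E := (mem_filter.mp hcscomp).1
      rw [hE, mem_image] at this
      obtain ⟨j, hj, hjc⟩ := this; exact ⟨j, hj, hjc⟩
    have hjA₁ : j ∈ A₁ := by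
      rw [hA₁def, mem_filter]; exact ⟨hjA, by rw [hjc]; exact hcsν⟩
    rw [hP₁def, mem_filter]
    exact ⟨mem_univ i, x, hbx, j, hjA₁, by rw [hjc]; exact hcsx, by rw [hjc]; exact hcsub⟩
  -- step 4 : induction on A₂
  have hA₂ss : A₂ ⊂ A := by
    rw [hA₂def]
    apply Finset.filter_ssubset.mpr
    exact ⟨j₀, hj₀A, by push_neg; rw [hj₀c]; exact hμν⟩
  have hwin₂ : ∀ j ∈ A₂, ∀ j' ∈ A₂, ((c j' : ℝ) + 1 - c j)/k + 2*ε < 1 := by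
    intro j hj j' hj'
    exact hwin j (filter_subset _ _ hj) j' (filter_subset _ _ hj')
  have hstep4 : A₂.card ≤ P₂.card := ih A₂ hA₂ss hwin₂
  -- step 5 : disjointness
  have hdisj : Disjoint P₁ P₂ := by
    rw [Finset.disjoint_left]
    intro i hi1 hi2
    rw [hP₁def, mem_filter] at hi1
    rw [hP₂def, mem_filter] at hi2
    obtain ⟨-, x, hbx, j, hjA₁, hxl, hxu⟩ := hi1
    obtain ⟨-, x', hbx', j', hjA₂, hx'l, hx'u⟩ := hi2
    rw [hA₁def, mem_filter] at hjA₁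
    rw [hA₂def, mem_filter] at hjA₂
    obtain ⟨hjA, hjν⟩ := hjA₁
    obtain ⟨hj'A, hj'ν⟩ := hjA₂
    push_neg at hj'ν
    obtain ⟨n, hn⟩ := expc_inj (hbx'.symm.trans hbx : expc x' = expc x)
    -- |x - x'| < 1
    have hw1 := hwin j' hj'A j hjA
    have hw2 := hwin j hjA j' hj'A
    have hd1 : x - x' < 1 := by
      have h1 : ((c j : ℝ) + 1 - c j')/k + 2*ε < 1 := hw1
      have h2 : x ≤ ((c j : ℝ) + 1)/k + ε := hxu
      have h3 : (c j' : ℝ)/k - ε ≤ x' := hx'l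
      have h4 : ((c j : ℝ) + 1)/k - (c j' : ℝ)/k = ((c j : ℝ) + 1 - c j')/k := by ring
      linarith [h4 ▸ h1]
    have hd2 : x' - x < 1 := by
      have h1 : ((c j' : ℝ) + 1 - c j)/k + 2*ε < 1 := hw2
      have h4 : ((c j' : ℝ) + 1)/k - (c j : ℝ)/k = ((c j' : ℝ) + 1 - c j)/k := by ring
      linarith [h4 ▸ h1]
    have hn0 : n = 0 := by
      rw [hn] at hd1 hd2
      have h1 : (n:ℝ) < 1 := by linarith
      have h2 : (-1:ℝ) < (n:ℝ) := by linarith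
      have h1' : n < 1 := by exact_mod_cast h1
      have h2' : -1 < n := by exact_mod_cast h2
      omega
    rw [hn0] at hn
    push_cast at hn
    rw [add_zero] at hn
    -- but x ≤ (ν+1)/k + ε < c j'/k - ε ≤ x'
    have hgap := hfact (c j') (mem_image_of_mem c hj'A) hj'ν
    have hjνR : (c j : ℝ) ≤ ν := by exact_mod_cast hjν
    have hsep : ((c j:ℝ) + 1)/k + ε < (c j' : ℝ)/k - ε := by
      have h5 : 2*ε < ((c j' : ℝ) - ((c j:ℝ) + 1))/k := by
        rw [lt_div_iff₀ hK]; linarith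
      have h6 : (c j' : ℝ)/k - ((c j:ℝ) + 1)/k = ((c j' : ℝ) - ((c j:ℝ) + 1))/k := by ring
      linarith
    rw [hn] at hx'l
    linarith
  -- combine
  have hP₁sub : P₁ ⊆ Finset.univ.filter (fun i : Fin L => ∃ x : ℝ, b i = expc x ∧
      ∃ j ∈ A, (c j : ℝ)/k - ε ≤ x ∧ x ≤ ((c j : ℝ) + 1)/k + ε) := by
    intro i hi
    rw [hP₁def, mem_filter] at hi
    obtain ⟨-, x, hbx, j, hjA₁, h1, h2⟩ := hi
    exact mem_filter.mpr ⟨mem_univ i, x, hbx, j, filter_subset _ _ hjA₁, h1, h2⟩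
  have hP₂sub : P₂ ⊆ Finset.univ.filter (fun i : Fin L => ∃ x : ℝ, b i = expc x ∧
      ∃ j ∈ A, (c j : ℝ)/k - ε ≤ x ∧ x ≤ ((c j : ℝ) + 1)/k + ε) := by
    intro i hi
    rw [hP₂def, mem_filter] at hi
    obtain ⟨-, x, hbx, j, hjA₂, h1, h2⟩ := hi
    exact mem_filter.mpr ⟨mem_univ i, x, hbx, j, filter_subset _ _ hjA₂, h1, h2⟩
  calc A.card = A₁.card + A₂.card := hcard.symm
    _ ≤ P₁.card + P₂.card := by
        exact Nat.add_le_add (hstep1.trans (hstep2.trans hstep3)) hstep4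
    _ = (P₁ ∪ P₂).card := (Finset.card_union_of_disjoint hdisj).symm
    _ ≤ _ := card_le_card (Finset.union_subset hP₁sub hP₂sub)

/-- marriage-lemma matching on the circle.  If for every `k`-arc
`I` the number of `a`'s in `I` is at most the number of `b`'s in `I ± ε`, then
the tuples can be matched within distance `ε + 1/k` (distance expressed via
the existence of real lifts `s, t` with `|s - t| ≤ ε + 1/k`). -/
theorem stmt_5 (L k : ℕ) (hk : 0 < k) (ε : ℝ) (hε : 0 < ε)
    (a b : Fin L → ℂ)
    (ha : ∀ r, ∃ s : ℝ, a r = expc s) (hb : ∀ r, ∃ s : ℝ, b r = expc s)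
    (harc : ∀ m n : ℤ, m < n →
      Nat.card {r : Fin L // ∃ t : ℝ,
          (m : ℝ) / k ≤ t ∧ t ≤ (n : ℝ) / k ∧ a r = expc t} ≤
        Nat.card {r : Fin L // ∃ t : ℝ,
          (m : ℝ) / k - ε ≤ t ∧ t ≤ (n : ℝ) / k + ε ∧ b r = expc t}) :
    ∃ σ : Equiv.Perm (Fin L), ∀ j, ∃ s t : ℝ,
      a j = expc s ∧ b (σ j) = expc t ∧ |s - t| ≤ ε + 1 / k := by
  classical
  have hK : (0:ℝ) < (k:ℝ) := by exact_mod_cast hk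
  by_cases htriv : (1:ℝ)/2 ≤ ε + 1/k
  · refine ⟨Equiv.refl _, fun j => ?_⟩
    obtain ⟨sx, hsx⟩ := ha j
    obtain ⟨tx, htx⟩ := hb j
    refine ⟨sx, tx + round (sx - tx), hsx, ?_, ?_⟩
    · show b j = _
      rw [htx, ← expc_add_int tx (round (sx - tx))]
    · have h1 := abs_sub_round (sx - tx)
      have h2 : sx - (tx + (round (sx - tx) : ℤ)) = (sx - tx) - round (sx - tx) := by ring
      rw [h2]; linarith
  push_neg at htriv
  have hε2 : ε < 1/2 := by
    have : (0:ℝ) < 1/k := by positivity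
    linarith
  -- normalized lifts
  choose s₀ hs₀ using ha
  choose t₀ ht₀ using hb
  set s : Fin L → ℝ := fun j => Int.fract (s₀ j) with hsdef
  set t : Fin L → ℝ := fun i => Int.fract (t₀ i) with htdef
  have has : ∀ j, a j = expc (s j) := by
    intro j
    rw [hs₀ j]
    have : s₀ j = s j + (⌊s₀ j⌋ : ℤ) := by
      show s₀ j = Int.fract (s₀ j) + (⌊s₀ j⌋ : ℤ)
      rw [Int.fract]; ring
    rw [this, expc_add_int]
  have hbt : ∀ i, b i = expc (t i) := by
    intro i
    rw [ht₀ i]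
    have : t₀ i = t i + (⌊t₀ i⌋ : ℤ) := by
      show t₀ i = Int.fract (t₀ i) + (⌊t₀ i⌋ : ℤ)
      rw [Int.fract]; ring
    rw [this, expc_add_int]
  have hs01 : ∀ j, 0 ≤ s j ∧ s j < 1 := fun j => ⟨Int.fract_nonneg _, Int.fract_lt_one _⟩
  have ht01 : ∀ i, 0 ≤ t i ∧ t i < 1 := fun i => ⟨Int.fract_nonneg _, Int.fract_lt_one _⟩
  -- cells
  set c : Fin L → ℤ := fun j => ⌊(k:ℝ) * s j⌋ with hcdef
  have hcb : ∀ j, 0 ≤ c j ∧ c j < (k:ℤ) := by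
    intro j
    constructor
    · apply Int.floor_nonneg.mpr
      exact mul_nonneg (le_of_lt hK) (hs01 j).1
    · apply Int.floor_lt.mpr
      push_cast
      calc (k:ℝ) * s j < k * 1 := by
            apply mul_lt_mul_of_pos_left (hs01 j).2 hK
        _ = k := mul_one _
  have hc : ∀ j, (c j : ℝ)/k ≤ s j ∧ s j ≤ ((c j : ℝ) + 1)/k := by
    intro j
    constructor
    · rw [div_le_iff₀ hK, mul_comm]
      exact Int.floor_le _
    · rw [le_div_iff₀ hK, mul_comm]
      exact le_of_lt (Int.lt_floor_add_one _)
  -- filter version of harc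
  have H : ∀ m n : ℤ, m < n →
      (Finset.univ.filter (fun r : Fin L => ∃ x : ℝ, (m:ℝ)/k ≤ x ∧ x ≤ (n:ℝ)/k ∧ a r = expc x)).card ≤
      (Finset.univ.filter (fun r : Fin L => ∃ x : ℝ, (m:ℝ)/k - ε ≤ x ∧ x ≤ (n:ℝ)/k + ε ∧ b r = expc x)).card := by
    intro m n hmn
    have h := harc m n hmn
    rwa [Nat.card_eq_fintype_card, Nat.card_eq_fintype_card,
      Fintype.card_subtype, Fintype.card_subtype] at h
  -- the Hall family
  set Rt : Fin L → Finset (Fin L) := fun j => Finset.univ.filter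
    (fun i => ∃ sx tx : ℝ, a j = expc sx ∧ b i = expc tx ∧ |sx - tx| ≤ ε + 1/k) with hRtdef
  have hall : ∀ A : Finset (Fin L), A.card ≤ (A.biUnion Rt).card := by
    intro A
    rcases A.eq_empty_or_nonempty with rfl | hAne
    · simp
    by_cases hbrk : ∃ d ∈ A.image c,
        ∀ e ∈ (A.image c) ∪ (A.image c).image (· + (k:ℤ)), d < e → 2*ε*(k:ℝ) < (e:ℝ) - d - 1
    · -- break case : rotate and use key lemma
      obtain ⟨d₀, hd₀D, hgap⟩ := hbrk
      have hd₀b : 0 ≤ d₀ ∧ d₀ < (k:ℤ) := by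
        rw [mem_image] at hd₀D
        obtain ⟨j, -, hj⟩ := hd₀D
        rw [← hj]; exact hcb j
      set s' : Fin L → ℝ := fun j => if d₀ < c j then s j else s j + 1 with hs'def
      set c' : Fin L → ℤ := fun j => if d₀ < c j then c j else c j + k with hc'def
      have hc' : ∀ j, (c' j : ℝ)/k ≤ s' j ∧ s' j ≤ ((c' j : ℝ) + 1)/k := by
        intro j
        rw [hs'def, hc'def]
        by_cases hd : d₀ < c j <;> simp only [hd, if_true, if_false, reduceIte]
        · exact hc j
        · push_cast
          constructor
          · rw [add_div, div_self (ne_of_gt hK)]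
            linarith [(hc j).1]
          · rw [show ((c j:ℝ) + k + 1)/k = ((c j:ℝ) + 1)/k + k/k by ring, div_self (ne_of_gt hK)]
            linarith [(hc j).2]
      have has' : ∀ j, a j = expc (s' j) := by
        intro j
        rw [hs'def]
        by_cases hd : d₀ < c j <;> simp only [hd, if_true, if_false, reduceIte]
        · exact has j
        · rw [has j, ← expc_add_int (s j) 1]; norm_num
      -- membership / bounds for c'
      have hc'mem : ∀ j ∈ A, c' j ∈ (A.image c) ∪ (A.image c).image (· + (k:ℤ)) ∧ d₀ < c' j ∧ c' j ≤ d₀ + k := by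
        intro j hj
        rw [hc'def]
        by_cases hd : d₀ < c j <;> simp only [hd, if_true, if_false, reduceIte]
        · refine ⟨mem_union_left _ (mem_image_of_mem c hj), by simp [hd], ?_⟩
          have := (hcb j).2
          omega
        · push_neg at hd
          refine ⟨mem_union_right _ ?_, ?_, ?_⟩
          · exact mem_image_of_mem _ (mem_image_of_mem c hj)
          · have := (hcb j).1
            omega
          · omega
      have hwin' : ∀ j ∈ A, ∀ j' ∈ A, ((c' j' : ℝ) + 1 - c' j)/k + 2*ε < 1 := by
        intro j hj j' hj'
        obtain ⟨hmem, hlt, -⟩ := hc'mem j hj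
        obtain ⟨-, -, hub⟩ := hc'mem j' hj'
        have h1 := hgap (c' j) hmem hlt
        have h2 : (c' j' : ℝ) ≤ (d₀:ℝ) + k := by exact_mod_cast hub
        rw [div_add' _ _ _ (ne_of_gt hK), div_lt_one hK]
        nlinarith
      have hkey := key_lemma k hk ε hε a b s' c' hc' has' H A hwin'
      refine le_trans hkey (card_le_card ?_)
      intro i hi
      rw [mem_filter] at hi
      obtain ⟨-, x, hbx, j, hjA, hxl, hxu⟩ := hi
      rw [mem_biUnion]
      refine ⟨j, hjA, ?_⟩
      rw [hRtdef, mem_filter]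
      refine ⟨mem_univ i, s' j, x, has' j, hbx, ?_⟩
      have h1 := (hc' j).1
      have h2 := (hc' j).2
      have h3 : ((c' j:ℝ) + 1)/k = (c' j:ℝ)/k + 1/k := by ring
      rw [abs_le]
      constructor <;> [linarith; linarith]
    · -- no break : every b is matched to something in A
      push_neg at hbrk
      refine le_trans (card_le_card (Finset.subset_univ A)) (card_le_card ?_)
      intro i _
      rw [mem_biUnion]
      -- helper
      have hrep : ∀ g : ℤ, (∃ j ∈ A, ∃ m : ℤ, g = c j + m*k) →
          ((g:ℝ)/k - ε ≤ t i ∧ t i ≤ ((g:ℝ)+1)/k + ε) → ∃ j ∈ A, i ∈ Rt j := by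
        rintro g ⟨j, hjA, m, hg⟩ ⟨hl, hu⟩
        refine ⟨j, hjA, ?_⟩
        rw [hRtdef, mem_filter]
        refine ⟨mem_univ i, s j + m, t i, ?_, hbt i, ?_⟩
        · rw [has j, ← expc_add_int (s j) m]
        · have h1 := (hc j).1
          have h2 := (hc j).2
          have hgr : (g:ℝ) = (c j : ℝ) + m*k := by exact_mod_cast hg
          have h3 : (g:ℝ)/k = (c j:ℝ)/k + m := by
            rw [hgr, add_div, mul_div_assoc, div_self (ne_of_gt hK), mul_one]
          have h4 : ((g:ℝ)+1)/k = ((c j:ℝ)+1)/k + m := by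
            rw [hgr, show ((c j:ℝ) + m*k + 1) = ((c j:ℝ)+1) + m*k by ring, add_div,
              mul_div_assoc, div_self (ne_of_gt hK), mul_one]
          have h5 : (g:ℝ)/k ≤ s j + m := by rw [h3]; linarith
          have h6 : s j + m ≤ ((g:ℝ)+1)/k := by rw [h4]; linarith
          have h7 : ((g:ℝ)+1)/k = (g:ℝ)/k + 1/k := by ring
          rw [abs_le]
          constructor <;> [linarith; linarith]
      -- find the covering cell
      set D : Finset ℤ := A.image c with hDdef
      set D2 : Finset ℤ := D ∪ D.image (· - (k:ℤ)) with hD2def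
      have hDrep : ∀ d ∈ D, ∃ j ∈ A, c j = d := by
        intro d hd
        rw [hDdef, mem_image] at hd
        obtain ⟨j, hj, hjc⟩ := hd
        exact ⟨j, hj, hjc⟩
      set T : Finset ℤ := D2.filter (fun d => (d:ℝ)/k ≤ t i) with hTdef
      have hTne : T.Nonempty := by
        obtain ⟨d, hd⟩ := hAne.image c
        refine ⟨d - k, ?_⟩
        rw [hTdef, mem_filter]
        constructor
        · rw [hD2def]
          exact mem_union_right _ (mem_image_of_mem _ hd)
        · obtain ⟨j, -, hjc⟩ := hDrep d hd
          have : d < (k:ℤ) := hjc ▸ (hcb j).2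
          have hdr : ((d - k : ℤ):ℝ) ≤ 0 := by
            push_cast
            have : (d:ℝ) ≤ k := by exact_mod_cast le_of_lt this
            linarith
          calc ((d - k : ℤ):ℝ)/k ≤ 0 := div_nonpos_of_nonpos_of_nonneg hdr (le_of_lt hK)
            _ ≤ t i := (ht01 i).1
      set cs : ℤ := T.max' hTne with hcsdef
      have hcsT : cs ∈ T := T.max'_mem hTne
      rw [hTdef, mem_filter] at hcsT
      obtain ⟨hcsD2, hcsx⟩ := hcsT
      -- representation of cs
      obtain ⟨dbar, hdbarD, dl, hdl, hdlval⟩ :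
          ∃ dbar ∈ D, ∃ dl : ℤ, cs = dbar + dl * k ∧ (dl = 0 ∨ dl = -1) := by
        rw [hD2def, mem_union] at hcsD2
        rcases hcsD2 with h | h
        · exact ⟨cs, h, 0, by ring, Or.inl rfl⟩
        · rw [mem_image] at h
          obtain ⟨dbar, hdbar, hdbareq⟩ := h
          exact ⟨dbar, hdbar, -1, by omega, Or.inr rfl⟩
      by_cases hcase : t i ≤ ((cs:ℝ)+1)/k + ε
      · obtain ⟨j, hjA, hjc⟩ := hDrep dbar hdbarD
        exact hrep cs ⟨j, hjA, dl, by rw [hjc]; exact hdl⟩ ⟨by linarith, hcase⟩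
      · push_neg at hcase
        -- successor
        obtain ⟨e, heD2', hlt, hegap⟩ := hbrk dbar hdbarD
        obtain ⟨f, hfD, el, hel, helval⟩ :
            ∃ f ∈ D, ∃ el : ℤ, e = f + el * k ∧ (el = 0 ∨ el = 1) := by
          rw [mem_union] at heD2'
          rcases heD2' with h | h
          · exact ⟨e, h, 0, by ring, Or.inl rfl⟩
          · rw [mem_image] at h
            obtain ⟨f, hf, hfeq⟩ := h
            exact ⟨f, hf, 1, by omega, Or.inr rfl⟩
        set e' : ℤ := e + dl * k with he'def
        have he'cs : cs < e' := by
          rw [he'def, hdl]; exact add_lt_add_left hlt _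
        have he'rep : e' = f + (el + dl) * k := by rw [he'def, hel]; ring
        have hfb : 0 ≤ f ∧ f < (k:ℤ) := by
          obtain ⟨j, -, hjc⟩ := hDrep f hfD
          rw [← hjc]; exact hcb j
        -- t i < e'/k
        have hti_lt : t i < (e':ℝ)/k := by
          have hcases : (el + dl = 0 ∨ el + dl = -1) ∨ el + dl = 1 := by omega
          rcases hcases with h0 | h1
          · -- e' ∈ D2, use maximality
            have he'D2 : e' ∈ D2 := by
              rw [hD2def, mem_union]
              rcases h0 with h | h
              · left; rw [he'rep, h]; simpa using hfD
              · right; rw [mem_image]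
                refine ⟨f, hfD, ?_⟩
                show f - (k:ℤ) = e'
                rw [he'rep, h]; ring
            by_contra hge
            push_neg at hge
            have : e' ∈ T := by
              rw [hTdef, mem_filter]; exact ⟨he'D2, hge⟩
            exact absurd (T.le_max' e' this) (not_le.mpr he'cs)
          · -- e' = f + k : e'/k ≥ 1 > t i
            have : (e':ℝ) = (f:ℝ) + k := by
              rw [he'rep, h1]; push_cast; ring
            rw [this]
            have hf0 : (0:ℝ) ≤ (f:ℝ) := by exact_mod_cast hfb.1
            calc t i < 1 := (ht01 i).2
              _ = (k:ℝ)/k := (div_self (ne_of_gt hK)).symm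
              _ ≤ ((f:ℝ) + k)/k := by
                  apply (div_le_div_iff_of_pos_right hK).mpr
                  linarith
        -- gap bound in rotated coordinates
        have hgapr : (e':ℝ) - (cs:ℝ) - 1 ≤ 2*ε*k := by
          have h0 : (e:ℝ) - (dbar:ℝ) - 1 ≤ 2*ε*k := hegap
          have he'r : (e':ℝ) = (e:ℝ) + (dl:ℝ)*(k:ℝ) := by
            rw [he'def]; push_cast; ring
          have hcsr : (cs:ℝ) = (dbar:ℝ) + (dl:ℝ)*(k:ℝ) := by
            rw [hdl]; push_cast; ring
          linarith
        have hupper : (e':ℝ)/k ≤ ((cs:ℝ)+1)/k + 2*ε := by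
          have h1 : (e':ℝ)/k - ((cs:ℝ)+1)/k = ((e':ℝ) - ((cs:ℝ)+1))/k := by ring
          have h2 : ((e':ℝ) - ((cs:ℝ)+1))/k ≤ 2*ε := by
            rw [div_le_iff₀ hK]; linarith
          linarith
        have hl : (e':ℝ)/k - ε ≤ t i := by linarith
        have hu : t i ≤ ((e':ℝ)+1)/k + ε := by
          have h1 : (e':ℝ)/k ≤ ((e':ℝ)+1)/k := by
            apply (div_le_div_iff_of_pos_right hK).mpr; linarith
          linarith
        obtain ⟨j, hjA, hjc⟩ := hDrep f hfD
        exact hrep e' ⟨j, hjA, el + dl, by rw [hjc]; exact he'rep⟩ ⟨hl, hu⟩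
  -- apply Hall's theorem
  obtain ⟨f, hfinj, hfr⟩ := (Finset.all_card_le_biUnion_card_iff_existsInjective' Rt).mp hall
  refine ⟨Equiv.ofBijective f (Finite.injective_iff_bijective.mp hfinj), fun j => ?_⟩
  have h := hfr j
  rw [hRtdef, mem_filter] at h
  exact h.2
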